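/- Let T, Ĉ be real numbers with T > 1, 0 < Ĉ < 1 and TĈ < 1. For real parameters T and Ĉ, define L₉(θ) = TĈ − Ĉ + (1 − TĈ)·cos²θ and R₂(θ) = cos θ + √(L₉(θ)). Let J ⊆ (0,∞) be an open interval and let θ : J → (0, π) be a differentiable function satisfying f·θ'(f) = (1/Ĉ)·R₂(θ(f))·sin(θ(f)) for all f ∈ J, and suppose R₂(θ(f)) ≠ 0 for all f ∈ J. Then θ is twice differentiable on J and, for all f ∈ J, sin(θ(f))·(θ''(f) + 2T·sin²(θ(f))·θ'(f)/f)/θ'(f)² = √(L₉(θ(f))) − (1 − TĈ)·sin²(θ(f))/√(L₉(θ(f))). -/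

import Mathlib

open Real Set

/-- The auxiliary identity below Formula (5.42):
`sin θ·(θ'' + 2T sin²θ·θ'/f)/θ'² = √L₉ − (1 − TĈ)·sin²θ/√L₉`. -/
theorem stmt_18
    (T C : ℝ) (hT : 1 < T) (hC0 : 0 < C) (hC1 : C < 1) (hTC : T * C < 1)
    (L₉ R₂ : ℝ → ℝ)
    (hL₉ : ∀ x : ℝ, L₉ x = T * C - C + (1 - T * C) * (Real.cos x) ^ 2)
    (hR₂ : ∀ x : ℝ, R₂ x = Real.cos x + Real.sqrt (L₉ x))
    (a b : ℝ) (J : Set ℝ) (hJ : J = Ioo a b) (hJsub : J ⊆ Ioi (0:ℝ))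
    (θ : ℝ → ℝ)
    (hθmem : ∀ f ∈ J, θ f ∈ Ioo (0:ℝ) π)
    (hθdiff : ∀ f ∈ J, DifferentiableAt ℝ θ f)
    (hθode : ∀ f ∈ J, f * deriv θ f = (1 / C) * R₂ (θ f) * Real.sin (θ f))
    (hR₂ne : ∀ f ∈ J, R₂ (θ f) ≠ 0) :
    (∀ f ∈ J, DifferentiableAt ℝ (deriv θ) f) ∧
    (∀ f ∈ J,
      Real.sin (θ f)
          * (deriv (deriv θ) f
              + 2 * T * (Real.sin (θ f)) ^ 2 * deriv θ f / f)
          / (deriv θ f) ^ 2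
        = Real.sqrt (L₉ (θ f))
            - (1 - T * C) * (Real.sin (θ f)) ^ 2 / Real.sqrt (L₉ (θ f))) := by
  have hC : C ≠ 0 := ne_of_gt hC0
  have hL9pos : ∀ x : ℝ, 0 < L₉ x := by
    intro x
    rw [hL₉]
    nlinarith [Real.cos_sq_le_one x, sq_nonneg (Real.cos x),
      mul_pos hC0 (sub_pos.mpr hT)]
  set g : ℝ → ℝ := fun x => (1 / C) * R₂ x * Real.sin x with hgdef
  set D : ℝ → ℝ := fun x =>
    (1 / C) * ((-Real.sin x +
        -(2 * (1 - T * C) * Real.sin x * Real.cos x) / (2 * Real.sqrt (L₉ x)))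
        * Real.sin x + R₂ x * Real.cos x) with hDdef
  have hgD : ∀ x : ℝ, HasDerivAt g (D x) x := by
    intro x
    have hL : HasDerivAt L₉ (-(2 * (1 - T * C) * Real.sin x * Real.cos x)) x := by
      have hfun : L₉ = fun y => T * C - C + (1 - T * C) * Real.cos y ^ 2 :=
        funext hL₉
      rw [hfun]
      have h := (((Real.hasDerivAt_cos x).fun_pow 2).const_mul (1 - T * C)).const_add
        (T * C - C)
      refine h.congr_deriv ?_
      push_cast
      ring
    have hs : HasDerivAt (fun y => Real.sqrt (L₉ y))
        (-(2 * (1 - T * C) * Real.sin x * Real.cos x) / (2 * Real.sqrt (L₉ x))) x :=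
      hL.sqrt (ne_of_gt (hL9pos x))
    have hR : HasDerivAt R₂
        (-Real.sin x +
          -(2 * (1 - T * C) * Real.sin x * Real.cos x) / (2 * Real.sqrt (L₉ x))) x := by
      have hfun : R₂ = fun y => Real.cos y + Real.sqrt (L₉ y) := funext hR₂
      rw [hfun]
      exact (Real.hasDerivAt_cos x).add hs
    have h := ((hR.mul (Real.hasDerivAt_sin x)).const_mul (1 / C))
    have hgg : g = fun y => (1 / C) * (R₂ y * Real.sin y) := by
      funext y; exact mul_assoc _ _ _
    rw [hgg, hDdef]
    exact h
  have hJopen : IsOpen J := by rw [hJ]; exact isOpen_Ioo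
  have key : ∀ f ∈ J, DifferentiableAt ℝ (deriv θ) f ∧
      deriv (deriv θ) f = (D (θ f) * deriv θ f * f - g (θ f) * 1) / f ^ 2 := by
    intro f hf
    have hf0 : (0:ℝ) < f := hJsub hf
    have hev : deriv θ =ᶠ[nhds f] fun y => g (θ y) / y := by
      filter_upwards [hJopen.mem_nhds hf] with y hy
      have hy0 : y ≠ 0 := ne_of_gt (hJsub hy)
      have h := hθode y hy
      have : deriv θ y = ((1 / C) * R₂ (θ y) * Real.sin (θ y)) / y := by
        rw [eq_div_iff hy0, mul_comm (deriv θ y) y]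
        exact h
      simpa [hgdef] using this
    have hθ' : HasDerivAt θ (deriv θ f) f := (hθdiff f hf).hasDerivAt
    have hcomp : HasDerivAt (fun y => g (θ y)) (D (θ f) * deriv θ f) f :=
      (hgD (θ f)).comp f hθ'
    have hp : HasDerivAt (fun y => g (θ y) / y)
        ((D (θ f) * deriv θ f * f - g (θ f) * 1) / f ^ 2) f :=
      hcomp.div (hasDerivAt_id f) (ne_of_gt hf0)
    refine ⟨hp.differentiableAt.congr_of_eventuallyEq hev, ?_⟩
    rw [hev.deriv_eq, hp.deriv]
  refine ⟨fun f hf => (key f hf).1, fun f hf => ?_⟩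
  have hf0 : (0:ℝ) < f := hJsub hf
  obtain ⟨hθ0, hθπ⟩ := hθmem f hf
  set c := Real.cos (θ f) with hc
  set si := Real.sin (θ f) with hsi
  set s := Real.sqrt (L₉ (θ f)) with hsdef
  have hspos : 0 < s := Real.sqrt_pos.mpr (hL9pos (θ f))
  have hs2 : s ^ 2 = T * C - C + (1 - T * C) * c ^ 2 := by
    rw [hsdef, Real.sq_sqrt (hL9pos (θ f)).le, hL₉]
  have hsc : si ^ 2 + c ^ 2 = 1 := Real.sin_sq_add_cos_sq (θ f)
  have hsipos : 0 < si := Real.sin_pos_of_pos_of_lt_pi hθ0 hθπ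
  have hRval : R₂ (θ f) = c + s := hR₂ (θ f)
  have hode : f * deriv θ f = (1 / C) * (c + s) * si := by
    rw [← hRval]; exact hθode f hf
  have hp0 : deriv θ f ≠ 0 := by
    intro h
    rw [h, mul_zero] at hode
    have h1 : (c + s) ≠ 0 := by rw [← hRval]; exact hR₂ne f hf
    have : (1 / C) * (c + s) * si ≠ 0 := by
      apply mul_ne_zero (mul_ne_zero (by positivity) h1) (ne_of_gt hsipos)
    exact this hode.symm
  have hval := (key f hf).2
  have hDval : D (θ f) = 1 / C *
      ((-si + -(2 * (1 - T * C) * si * c) / (2 * s)) * si + (c + s) * c) := by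
    simp only [hDdef, hRval, ← hc, ← hsi, ← hsdef]
  have hgval : g (θ f) = 1 / C * (c + s) * si := by
    simp only [hgdef, hRval, ← hsi]
  set p := deriv θ f with hpdef
  have hpval : p = (c + s) * si / (C * f) := by
    rw [eq_div_iff (mul_ne_zero hC (ne_of_gt hf0))]
    field_simp at hode ⊢
    linarith [hode]
  have hcs : c + s ≠ 0 := by rw [← hRval]; exact hR₂ne f hf
  rw [hval, hDval, hgval, hpval]
  have hsine : si ≠ 0 := ne_of_gt hsipos
  have hsne : s ≠ 0 := ne_of_gt hspos
  have hfne : f ≠ 0 := ne_of_gt hf0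
  field_simp
  linear_combination (-s) * hs2 + (C * T * s) * hsc
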